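/- Each coordinate function x_i of the n-dimensional Peano curve satisfies the self-affinity identity: for every k ∈ ℕ and t = Φ((t_s)) ∈ [0,1], writing t(k) = Φ(t_1,…,t_{kn},0,0,…), one has 3^k (x_i(t) − x_i(t(k))) = (−1)^{σ(k)} x_i(3^{kn}(t − t(k))), where σ(k) = ∑_{q=1}^{kn} t_q − ∑_{r=0}^{k−1} t_{i+rn}. -/

import Mathlib

open scoped BigOperators ENNReal

/-- `Φ` : evaluation of a ternary digit sequence (digits at indices `1,2,3,…`). -/
noncomputable def Phi (t : ℕ → ℕ) : ℝ := ∑' k : ℕ, (t (k + 1) : ℝ) / 3 ^ (k + 1)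

/-- A sequence of ternary digits (elements of `D = {0,1,2}`). -/
def IsDigitSeq (t : ℕ → ℕ) : Prop := ∀ k, t k ≤ 2

/-- `S_{i+jn}(𝐭) = ∑_{k=1}^{i+jn} t_k − ∑_{s=0}^{j} t_{i+sn}`. -/
def S (n i j : ℕ) (t : ℕ → ℕ) : ℤ :=
  (∑ k ∈ Finset.Icc 1 (i + j * n), (t k : ℤ)) -
    ∑ s ∈ Finset.range (j + 1), (t (i + s * n) : ℤ)

/-- The operator `ξ(a) = 2 − a`, as a permutation of `ℝ` (so that integer powers
`ξ^m`, `m : ℤ`, make sense). -/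
def xiPerm : Equiv.Perm ℝ :=
  ⟨fun a => 2 - a, fun a => 2 - a, fun a => by dsimp; ring, fun a => by dsimp; ring⟩

/-- `x_i(𝐭) = ∑_{j=0}^∞ ξ^{S_{i+jn}(𝐭)}(t_{i+jn}) / 3^{j+1}`. -/
noncomputable def xcoord (n i : ℕ) (t : ℕ → ℕ) : ℝ :=
  ∑' j : ℕ, ((xiPerm ^ (S n i j t)) ((t (i + j * n) : ℝ))) / 3 ^ (j + 1)

/-- The canonical ternary digit expansion of `t ∈ [0,1]` (all digits `2` for `t = 1`). -/
noncomputable def ternaryDigit (t : ℝ) (k : ℕ) : ℕ :=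
  if t = 1 then 2 else (⌊t * 3 ^ k⌋).toNat % 3

/-- The `i`-th coordinate function of the `n`-dimensional Peano curve, as a function
on `[0,1]` (via the canonical ternary representation; by well-definedness this agrees
with `xcoord` on any ternary representation). -/
noncomputable def peanoCoord (n i : ℕ) (t : ℝ) : ℝ := xcoord n i (ternaryDigit t)

/-! ### Auxiliary lemmas -/

section Aux

lemma xiPerm_apply (x : ℝ) : xiPerm x = 2 - x := rfl
lemma xiPerm_inv_apply (x : ℝ) : xiPerm⁻¹ x = 2 - x := rfl

lemma neg_one_zpow_even {m : ℤ} (h : Even m) : (-1 : ℝ) ^ m = 1 := by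
  obtain ⟨c, rfl⟩ := h
  rw [zpow_add₀ (by norm_num : (-1:ℝ) ≠ 0), ← mul_zpow]
  norm_num

lemma xi_zpow (m : ℤ) (x : ℝ) :
    (xiPerm ^ m) x = (-1 : ℝ) ^ m * x + (1 - (-1 : ℝ) ^ m) := by
  induction m using Int.induction_on generalizing x with
  | zero => simp
  | succ n ih =>
    have h1 : (xiPerm ^ ((n : ℤ) + 1)) x = (xiPerm ^ (n : ℤ)) (xiPerm x) := by
      rw [zpow_add_one, Equiv.Perm.mul_apply]
    have h2 : (-1 : ℝ) ^ ((n : ℤ) + 1) = (-1 : ℝ) ^ (n : ℤ) * (-1) := by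
      rw [zpow_add_one₀ (by norm_num : (-1:ℝ) ≠ 0)]
    rw [h1, xiPerm_apply, ih (2-x), h2]; ring
  | pred n ih =>
    have h1 : (xiPerm ^ (-(n : ℤ) - 1)) x = (xiPerm ^ (-(n : ℤ))) (xiPerm⁻¹ x) := by
      rw [zpow_sub_one, Equiv.Perm.mul_apply]
    have h2 : (-1 : ℝ) ^ (-(n : ℤ) - 1) = (-1 : ℝ) ^ (-(n : ℤ)) * (-1) := by
      rw [zpow_sub_one₀ (by norm_num : (-1:ℝ) ≠ 0)]; norm_num
    rw [h1, xiPerm_inv_apply, ih (2-x), h2]; ring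

lemma neg_one_zpow_odd {m : ℤ} (h : Odd m) : (-1 : ℝ) ^ m = -1 := h.neg_one_zpow

lemma neg_one_zpow_add (x y : ℤ) : (-1 : ℝ) ^ (x + y) = (-1:ℝ) ^ x * (-1:ℝ) ^ y :=
  zpow_add₀ (by norm_num) x y

lemma abs_xi_zpow_le {m : ℤ} {d : ℕ} (hd : d ≤ 2) : |(xiPerm ^ m) (d : ℝ)| ≤ 2 := by
  have hd' : (d : ℝ) ≤ 2 := by exact_mod_cast hd
  have hd0 : (0:ℝ) ≤ d := Nat.cast_nonneg d
  rw [xi_zpow]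
  rcases Int.even_or_odd m with h | h
  · rw [neg_one_zpow_even h]; rw [abs_le]; constructor <;> linarith
  · rw [neg_one_zpow_odd h]; rw [abs_le]; constructor <;> linarith

lemma summable_two_div : Summable (fun j : ℕ => (2:ℝ) / 3 ^ (j+1)) := by
  have h : Summable (fun j : ℕ => (2/3 : ℝ) * (3 : ℝ)⁻¹ ^ j) :=
    (summable_geometric_of_lt_one (by norm_num) (by norm_num)).mul_left _
  refine h.congr fun j => ?_
  rw [pow_succ]
  field_simp
  rw [← mul_pow]; norm_num

lemma tsum_two_div : (∑' j : ℕ, (2:ℝ) / 3 ^ (j+1)) = 1 := by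
  have h : (∑' j : ℕ, (2/3 : ℝ) * (3 : ℝ)⁻¹ ^ j) = 1 := by
    rw [tsum_mul_left, tsum_geometric_of_lt_one (by norm_num) (by norm_num)]
    norm_num
  rw [← h]
  refine tsum_congr fun j => ?_
  rw [pow_succ]
  field_simp
  rw [← mul_pow]; norm_num

lemma summable_two_div_shift (N : ℕ) : Summable (fun k : ℕ => (2:ℝ) / 3 ^ (k+N+1)) := by
  refine (summable_two_div.mul_left ((3:ℝ)^N)⁻¹).congr fun k => ?_
  have h : k + N + 1 = N + (k+1) := by omega
  rw [h, pow_add]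
  field_simp
  rw [pow_add, pow_succ]
  ring

lemma tsum_two_div_shift (N : ℕ) : (∑' k : ℕ, (2:ℝ) / 3 ^ (k+N+1)) = ((3:ℝ)^N)⁻¹ := by
  have h1 : (∑' k : ℕ, (2:ℝ) / 3 ^ (k+N+1)) = ∑' k : ℕ, ((3:ℝ)^N)⁻¹ * (2 / 3 ^ (k+1)) := by
    refine tsum_congr fun k => ?_
    have h : k + N + 1 = N + (k+1) := by omega
    rw [h, pow_add]
    field_simp
  rw [h1, tsum_mul_left, tsum_two_div, mul_one]

lemma summable_const_div_shift (c : ℝ) (N : ℕ) :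
    Summable (fun k : ℕ => c / 3 ^ (k+N+1)) := by
  refine ((summable_two_div_shift N).mul_left (c/2)).congr fun k => ?_
  field_simp

lemma tsum_const_div_shift (c : ℝ) (N : ℕ) :
    (∑' k : ℕ, c / 3 ^ (k+N+1)) = c / 2 * ((3:ℝ)^N)⁻¹ := by
  have h1 : (∑' k : ℕ, c / 3 ^ (k+N+1)) = ∑' k : ℕ, (c/2) * ((2:ℝ) / 3 ^ (k+N+1)) := by
    refine tsum_congr fun k => ?_
    field_simp
  rw [h1, tsum_mul_left, tsum_two_div_shift]

lemma summable_phi {t : ℕ → ℕ} (ht : IsDigitSeq t) :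
    Summable (fun k : ℕ => (t (k + 1) : ℝ) / 3 ^ (k + 1)) := by
  refine Summable.of_nonneg_of_le (fun k => by positivity) (fun k => ?_) summable_two_div
  have : (t (k+1) : ℝ) ≤ 2 := by exact_mod_cast ht (k+1)
  gcongr

lemma phi_nonneg {t : ℕ → ℕ} : 0 ≤ Phi t :=
  tsum_nonneg fun k => by positivity

lemma phi_le_one {t : ℕ → ℕ} (ht : IsDigitSeq t) : Phi t ≤ 1 := by
  rw [← tsum_two_div]
  refine Summable.tsum_le_tsum (fun k => ?_) (summable_phi ht) summable_two_div
  have : (t (k+1) : ℝ) ≤ 2 := by exact_mod_cast ht (k+1)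
  gcongr

lemma isDigitSeq_ternary (t : ℝ) : IsDigitSeq (ternaryDigit t) := by
  intro k
  unfold ternaryDigit
  split
  · exact le_refl 2
  · omega

lemma phi_ternary {t : ℝ} (h0 : 0 ≤ t) (h1 : t ≤ 1) : Phi (ternaryDigit t) = t := by
  rcases eq_or_lt_of_le h1 with h1 | h1
  · subst h1
    have hd : ∀ k, ternaryDigit 1 k = 2 := fun k => if_pos rfl
    unfold Phi
    simp only [hd]
    exact tsum_two_div
  · have hne : t ≠ 1 := ne_of_lt h1
    have hd : ∀ k, ternaryDigit t k = (⌊t * 3 ^ k⌋).toNat % 3 := fun k => if_neg hne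
    set m : ℕ → ℤ := fun k => ⌊t * 3 ^ k⌋ with hm
    have hm0 : ∀ k, 0 ≤ m k := fun k => Int.floor_nonneg.mpr (by positivity)
    have hle : ∀ k, (m k : ℝ) ≤ t * 3 ^ k := fun k => Int.floor_le _
    have hlt : ∀ k, t * 3 ^ k < m k + 1 := fun k => Int.lt_floor_add_one _
    have key : ∀ k, (ternaryDigit t (k+1) : ℤ) = m (k+1) - 3 * m k := by
      intro k
      have h3 : 3 * m k ≤ m (k+1) := by
        rw [hm]
        refine Int.le_floor.mpr ?_
        push_cast
        have := hle k
        calc (3:ℝ) * m k ≤ 3 * (t * 3 ^ k) := by linarith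
        _ = t * 3 ^ (k+1) := by ring
      have h4 : m (k+1) < 3 * m k + 3 := by
        have h5' : (m (k+1) : ℝ) ≤ t * 3 ^ (k+1) := hle (k+1)
        have h5 : t * 3 ^ (k+1) < 3 * m k + 3 := by
          have := hlt k
          calc t * 3^(k+1) = 3 * (t * 3^k) := by ring
          _ < 3 * (m k + 1) := by linarith
          _ = 3 * m k + 3 := by ring
        exact_mod_cast lt_of_le_of_lt h5' h5
      rw [hd]
      have htn : ((⌊t * 3 ^ (k+1)⌋.toNat : ℤ)) = m (k+1) := Int.toNat_of_nonneg (hm0 (k+1))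
      push_cast
      rw [htn]
      omega
    have m0 : m 0 = 0 := by
      rw [hm]
      simp only [pow_zero, mul_one]
      exact Int.floor_eq_zero_iff.mpr ⟨h0, h1⟩
    have hP : ∀ N, ∑ j ∈ Finset.range N, (ternaryDigit t (j+1) : ℝ) / 3 ^ (j+1)
        = (m N : ℝ) / 3 ^ N := by
      intro N
      calc ∑ j ∈ Finset.range N, (ternaryDigit t (j+1) : ℝ) / 3 ^ (j+1)
          = ∑ j ∈ Finset.range N, ((m (j+1) : ℝ) / 3 ^ (j+1) - (m j : ℝ) / 3 ^ j) := by
            refine Finset.sum_congr rfl fun j _ => ?_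
            have : (ternaryDigit t (j+1) : ℝ) = (m (j+1) : ℝ) - 3 * m j := by
              exact_mod_cast key j
            rw [this]
            field_simp
            ring
        _ = (m N : ℝ) / 3 ^ N - (m 0 : ℝ) / 3 ^ 0 :=
            Finset.sum_range_sub (fun k => (m k : ℝ) / 3 ^ k) N
        _ = (m N : ℝ) / 3 ^ N := by rw [m0]; simp
    have hts : Filter.Tendsto (fun N => ∑ j ∈ Finset.range N, (ternaryDigit t (j+1) : ℝ) / 3 ^ (j+1))
        Filter.atTop (nhds t) := by
      simp only [hP]
      have hub : ∀ N, (m N : ℝ) / 3 ^ N ≤ t := by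
        intro N
        rw [div_le_iff₀ (by positivity)]
        exact hle N
      have hlb : ∀ N, t - ((3:ℝ)⁻¹) ^ N ≤ (m N : ℝ) / 3 ^ N := by
        intro N
        have h5 : t * 3 ^ N - 1 ≤ (m N : ℝ) := by have := hlt N; linarith
        rw [le_div_iff₀ (by positivity : (0:ℝ) < 3 ^ N)]
        have h6 : (3:ℝ)⁻¹ ^ N * 3 ^ N = 1 := by
          rw [← mul_pow]; norm_num
        have h7 : (t - (3:ℝ)⁻¹ ^ N) * 3 ^ N = t * 3 ^ N - 1 := by
          rw [sub_mul, h6]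
        linarith
      have hgeo : Filter.Tendsto (fun N : ℕ => t - ((3:ℝ)⁻¹) ^ N) Filter.atTop (nhds t) := by
        have h8 := tendsto_pow_atTop_nhds_zero_of_lt_one (show (0:ℝ) ≤ 3⁻¹ by norm_num)
          (show (3:ℝ)⁻¹ < 1 by norm_num)
        have h9 := Filter.Tendsto.const_sub t h8
        simpa using h9
      exact tendsto_of_tendsto_of_tendsto_of_le_of_le hgeo tendsto_const_nhds hlb hub
    have hsum := (summable_phi (isDigitSeq_ternary t)).hasSum.tendsto_sum_nat
    exact tendsto_nhds_unique hsum hts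

/-! ### Finite sum helpers -/

lemma Icc_one_eq_Ioc (X : ℕ) : Finset.Icc 1 X = Finset.Ioc 0 X := by
  ext q
  simp only [Finset.mem_Icc, Finset.mem_Ioc]
  omega

lemma sum_Icc_split (f : ℕ → ℤ) {M N : ℕ} (h : M ≤ N) :
    ∑ q ∈ Finset.Icc 1 N, f q
      = (∑ q ∈ Finset.Icc 1 M, f q) + ∑ q ∈ Finset.Ioc M N, f q := by
  rw [Icc_one_eq_Ioc, Icc_one_eq_Ioc]
  exact (Finset.sum_Ioc_consecutive f (Nat.zero_le M) h).symm

lemma sum_range_split (f : ℕ → ℤ) {M N : ℕ} (h : M ≤ N) :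
    ∑ s ∈ Finset.range N, f s
      = (∑ s ∈ Finset.range M, f s) + ∑ s ∈ Finset.Ico M N, f s :=
  (Finset.sum_range_add_sum_Ico f h).symm

lemma even_sum_int {s : Finset ℕ} {f : ℕ → ℤ} (h : ∀ x ∈ s, Even (f x)) :
    Even (∑ x ∈ s, f x) := by
  induction s using Finset.cons_induction with
  | empty => simp
  | cons a s ha ih =>
    rw [Finset.sum_cons]
    exact (h a (Finset.mem_cons_self a s)).add (ih fun x hx => h x (Finset.mem_cons.mpr (Or.inr hx)))

/-- Splitting `S` between two levels. -/
lemma S_split (n i : ℕ) (t : ℕ → ℕ) {j₀ j : ℕ} (hj : j₀ ≤ j) :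
    S n i j t = S n i j₀ t + ((∑ q ∈ Finset.Ioc (i + j₀*n) (i + j*n), (t q : ℤ))
      - ∑ s ∈ Finset.Ico (j₀+1) (j+1), (t (i + s*n) : ℤ)) := by
  have hmn : i + j₀ * n ≤ i + j * n := by
    have : j₀ * n ≤ j * n := Nat.mul_le_mul_right n hj
    omega
  unfold S
  rw [sum_Icc_split (fun q => (t q : ℤ)) hmn,
    sum_range_split (fun s => (t (i + s*n) : ℤ)) (show j₀ + 1 ≤ j + 1 by omega)]
  ring

lemma summable_xcoord (n i : ℕ) {t : ℕ → ℕ} (ht : IsDigitSeq t) :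
    Summable (fun j : ℕ => ((xiPerm ^ (S n i j t)) ((t (i + j * n) : ℝ))) / 3 ^ (j + 1)) := by
  refine Summable.of_norm_bounded summable_two_div fun j => ?_
  rw [Real.norm_eq_abs, abs_div, abs_of_pos (by positivity : (0:ℝ) < 3^(j+1))]
  gcongr
  exact abs_xi_zpow_le (ht _)

lemma S_congr_lt {n i : ℕ} (hi : 1 ≤ i) {a b : ℕ → ℕ} {m : ℕ}
    (hpre : ∀ q, 1 ≤ q → q < m → a q = b q) {j : ℕ} (hj : i + j*n < m) :
    S n i j a = S n i j b := by
  unfold S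
  congr 1
  · refine Finset.sum_congr rfl fun q hq => ?_
    rw [Finset.mem_Icc] at hq
    rw [hpre q hq.1 (lt_of_le_of_lt hq.2 hj)]
  · refine Finset.sum_congr rfl fun s hs => ?_
    rw [Finset.mem_range] at hs
    have h1 : s * n ≤ j * n := Nat.mul_le_mul_right n (by omega)
    rw [hpre (i + s*n) (by omega) (by omega)]

end Aux

/-! ### Classification of double ternary representations -/

lemma phi_tail {a b : ℕ → ℕ} (ha : IsDigitSeq a) (hb : IsDigitSeq b) (hab : Phi a = Phi b)
    {m : ℕ} (hm1 : 1 ≤ m) (hpre : ∀ q, 1 ≤ q → q < m → a q = b q) (hgt : b m < a m) :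
    a m = b m + 1 ∧ ∀ s, m < s → a s = 0 ∧ b s = 2 := by
  set f : ℕ → ℝ := fun k => (a (k+1) : ℝ) / 3^(k+1) - (b (k+1):ℝ) / 3^(k+1) with hf
  have hfs : Summable f := (summable_phi ha).sub (summable_phi hb)
  have hf0 : (∑' k, f k) = 0 := by
    rw [hf]
    rw [Summable.tsum_sub (summable_phi ha) (summable_phi hb)]
    have : Phi a - Phi b = 0 := by rw [hab]; ring
    exact this
  have hsplit := Summable.sum_add_tsum_nat_add m hfs
  have hrange : ∑ k ∈ Finset.range m, f k = ((a m : ℝ) - b m) / 3 ^ m := by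
    rw [Finset.sum_eq_single (m-1)]
    · rw [hf]
      have h : m - 1 + 1 = m := by omega
      simp only [h]
      ring
    · intro k hk hne
      rw [Finset.mem_range] at hk
      rw [hf]
      have h := hpre (k+1) (by omega) (by omega)
      simp only [h]
      ring
    · intro h
      exact absurd (Finset.mem_range.mpr (by omega : m - 1 < m)) h
  have htail : (∑' k, f (k + m)) = -(((a m : ℝ) - b m) / 3 ^ m) := by
    have := hsplit
    rw [hf0, hrange] at this
    linarith
  have hfl : ∀ k, -((2:ℝ) / 3^(k+m+1)) ≤ f (k + m) := by
    intro k
    rw [hf]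
    have hb2 : (b (k+m+1) : ℝ) ≤ 2 := by exact_mod_cast hb (k+m+1)
    have ha0 : (0:ℝ) ≤ (a (k+m+1) : ℝ) := Nat.cast_nonneg _
    show -((2:ℝ) / 3^(k+m+1)) ≤ (a (k+m+1) : ℝ) / 3^(k+m+1) - (b (k+m+1):ℝ) / 3^(k+m+1)
    rw [div_sub_div_same, ← neg_div]
    gcongr
    · linarith
  have hsm : Summable (fun k => f (k + m)) := (summable_nat_add_iff m).2 hfs
  have hge : -(((3:ℝ)^m)⁻¹) ≤ ∑' k, f (k + m) := by
    have h1 : (∑' k : ℕ, -((2:ℝ) / 3^(k+m+1))) = -(((3:ℝ)^m)⁻¹) := by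
      rw [tsum_neg, tsum_two_div_shift]
    rw [← h1]
    exact Summable.tsum_le_tsum hfl ((summable_two_div_shift m).neg) hsm
  have hcast : (1:ℝ) ≤ (a m : ℝ) - b m := by
    have : b m + 1 ≤ a m := hgt
    have h2 : (b m : ℝ) + 1 ≤ (a m : ℝ) := by exact_mod_cast this
    linarith
  have hc1 : (a m : ℝ) - b m ≤ 1 := by
    by_contra hcon
    push_neg at hcon
    have hpm : (0:ℝ) < 3 ^ m := by positivity
    have := htail
    rw [this] at hge
    have : ((a m : ℝ) - b m) / 3 ^ m ≤ ((3:ℝ)^m)⁻¹ := by linarith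
    rw [div_le_iff₀ hpm, inv_mul_cancel₀ (ne_of_gt hpm)] at this
    linarith
  have ham : a m = b m + 1 := by
    have h3 : (a m : ℝ) = (b m : ℝ) + 1 := by linarith
    exact_mod_cast h3
  refine ⟨ham, ?_⟩
  -- tail digits
  have htail1 : (∑' k, f (k + m)) = -(((3:ℝ)^m)⁻¹) := by
    rw [htail, ham]
    push_cast
    rw [inv_eq_one_div]
    ring
  set g : ℕ → ℝ := fun k => f (k + m) + (2:ℝ) / 3^(k+m+1) with hg
  have hg0 : ∀ k, 0 ≤ g k := fun k => by rw [hg]; have := hfl k; dsimp; linarith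
  have hgs : Summable g := hsm.add (summable_two_div_shift m)
  have hgsum : (∑' k, g k) = 0 := by
    rw [hg, Summable.tsum_add hsm (summable_two_div_shift m), htail1, tsum_two_div_shift]
    ring
  have hgz : ∀ k, g k = 0 := by
    intro k
    have h4 := Summable.le_tsum hgs k (fun j _ => hg0 j)
    have := hg0 k
    rw [hgsum] at h4
    linarith
  intro s hs
  have h5 := hgz (s - m - 1)
  have hkm : s - m - 1 + m + 1 = s := by omega
  rw [hg] at h5
  dsimp only at h5
  rw [hf] at h5
  dsimp only at h5
  rw [hkm] at h5
  rw [div_sub_div_same, ← add_div] at h5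
  have hpow : (0:ℝ) < 3 ^ s := by positivity
  have h6 : (a s : ℝ) - (b s : ℝ) + 2 = 0 := by
    rcases div_eq_zero_iff.mp h5 with h | h
    · exact h
    · exact absurd h (ne_of_gt hpow)
  have hb2' : (b s : ℝ) ≤ 2 := by exact_mod_cast hb s
  have ha0' : (0:ℝ) ≤ (a s : ℝ) := Nat.cast_nonneg _
  constructor
  · have : (a s : ℝ) = 0 := by linarith
    exact_mod_cast this
  · have : (b s : ℝ) = 2 := by linarith
    exact_mod_cast this

/-! ### Well-definedness of `xcoord` -/

lemma xcoord_congr (n i : ℕ) (hi : 1 ≤ i) {a b : ℕ → ℕ}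
    (h : ∀ q, 1 ≤ q → a q = b q) : xcoord n i a = xcoord n i b := by
  unfold xcoord
  refine tsum_congr fun j => ?_
  have hS : S n i j a = S n i j b := by
    unfold S
    congr 1
    · refine Finset.sum_congr rfl fun q hq => ?_
      rw [Finset.mem_Icc] at hq
      rw [h q hq.1]
    · refine Finset.sum_congr rfl fun s _ => ?_
      rw [h (i + s*n) (by omega)]
  rw [hS, h (i + j*n) (by omega)]

lemma xcoord_switch (n i : ℕ) (hn : 1 ≤ n) (hi : 1 ≤ i) {a b : ℕ → ℕ}
    (ha : IsDigitSeq a) (hb : IsDigitSeq b) {m : ℕ} (hm1 : 1 ≤ m)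
    (hpre : ∀ q, 1 ≤ q → q < m → a q = b q)
    (hm : a m = b m + 1) (htail : ∀ s, m < s → a s = 0 ∧ b s = 2) :
    xcoord n i a = xcoord n i b := by
  have hFa := summable_xcoord n i ha
  have hFb := summable_xcoord n i hb
  set F : ℕ → ℝ := fun j => ((xiPerm ^ (S n i j a)) ((a (i + j * n) : ℝ))) / 3 ^ (j + 1) with hF
  set G : ℕ → ℝ := fun j => ((xiPerm ^ (S n i j b)) ((b (i + j * n) : ℝ))) / 3 ^ (j + 1) with hG
  suffices hkey : (∑' j, (F j - G j)) = 0 by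
    have h1 : xcoord n i a - xcoord n i b = ∑' j, (F j - G j) := (Summable.tsum_sub hFa hFb).symm
    rw [hkey] at h1
    linarith
  have hm_le : ∀ {j}, i + j*n < m → F j = G j := by
    intro j hj
    simp only [hF, hG]
    rw [S_congr_lt hi hpre hj, hpre (i + j*n) (by omega) hj]
  have hIccm : ∑ q ∈ Finset.Icc 1 m, ((a q : ℤ) - b q) = 1 := by
    rw [Finset.sum_eq_single m]
    · rw [hm]; push_cast; ring
    · intro q hq hne
      rw [Finset.mem_Icc] at hq
      rw [hpre q hq.1 (by omega)]
      ring
    · intro hcon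
      exact absurd (Finset.mem_Icc.mpr ⟨hm1, le_refl m⟩) hcon
  by_cases hex : ∃ j₀, i + j₀ * n = m
  · obtain ⟨j₀, hj₀⟩ := hex
    have hRj₀ : ∑ s ∈ Finset.range (j₀+1), ((a (i + s*n) : ℤ) - b (i + s*n)) = 1 := by
      rw [Finset.sum_eq_single j₀]
      · rw [hj₀, hm]; push_cast; ring
      · intro s hs hne
        rw [Finset.mem_range] at hs
        have hsucc : (s+1) * n = s*n + n := Nat.succ_mul s n
        have hmul : (s+1) * n ≤ j₀ * n := Nat.mul_le_mul_right n (by omega)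
        rw [hpre (i + s*n) (by omega) (by omega)]
        ring
      · intro hcon
        exact absurd (Finset.mem_range.mpr (by omega)) hcon
    have hSj₀ : S n i j₀ a = S n i j₀ b := by
      have hdiff : S n i j₀ a - S n i j₀ b
          = (∑ q ∈ Finset.Icc 1 (i + j₀*n), ((a q : ℤ) - b q))
            - ∑ s ∈ Finset.range (j₀+1), ((a (i + s*n) : ℤ) - b (i + s*n)) := by
        unfold S
        rw [Finset.sum_sub_distrib, Finset.sum_sub_distrib]
        ring
      rw [hj₀, hIccm, hRj₀] at hdiff
      omega
    have hSa : ∀ j, j₀ ≤ j → S n i j a = S n i j₀ a := by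
      intro j hj
      rw [S_split n i a hj]
      have hz1 : ∑ q ∈ Finset.Ioc (i + j₀*n) (i + j*n), ((a q : ℤ)) = 0 := by
        refine Finset.sum_eq_zero fun q hq => ?_
        rw [Finset.mem_Ioc, hj₀] at hq
        rw [(htail q hq.1).1]
        simp
      have hz2 : ∑ s ∈ Finset.Ico (j₀+1) (j+1), ((a (i + s*n) : ℤ)) = 0 := by
        refine Finset.sum_eq_zero fun s hs => ?_
        rw [Finset.mem_Ico] at hs
        have hsucc : (j₀+1) * n = j₀*n + n := Nat.succ_mul j₀ n
        have hmul : (j₀+1) * n ≤ s * n := Nat.mul_le_mul_right n (by omega)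
        rw [(htail (i + s*n) (by omega)).1]
        simp
      rw [hz1, hz2]
      ring
    have hSb : ∀ j, j₀ ≤ j → ∃ c : ℤ, S n i j b = S n i j₀ b + 2 * c := by
      intro j hj
      rw [S_split n i b hj]
      have hz1 : ∑ q ∈ Finset.Ioc (i + j₀*n) (i + j*n), ((b q : ℤ))
          = ((Finset.Ioc (i + j₀*n) (i + j*n)).card : ℤ) * 2 := by
        calc ∑ q ∈ Finset.Ioc (i + j₀*n) (i + j*n), ((b q : ℤ))
            = ∑ _q ∈ Finset.Ioc (i + j₀*n) (i + j*n), (2:ℤ) := by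
              refine Finset.sum_congr rfl fun q hq => ?_
              rw [Finset.mem_Ioc, hj₀] at hq
              rw [(htail q hq.1).2]
              simp
          _ = ((Finset.Ioc (i + j₀*n) (i + j*n)).card : ℤ) * 2 := by
              rw [Finset.sum_const, nsmul_eq_mul]
      have hz2 : ∑ s ∈ Finset.Ico (j₀+1) (j+1), ((b (i + s*n) : ℤ))
          = ((Finset.Ico (j₀+1) (j+1)).card : ℤ) * 2 := by
        calc ∑ s ∈ Finset.Ico (j₀+1) (j+1), ((b (i + s*n) : ℤ))
            = ∑ _s ∈ Finset.Ico (j₀+1) (j+1), (2:ℤ) := by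
              refine Finset.sum_congr rfl fun s hs => ?_
              rw [Finset.mem_Ico] at hs
              have hsucc : (j₀+1) * n = j₀*n + n := Nat.succ_mul j₀ n
              have hmul : (j₀+1) * n ≤ s * n := Nat.mul_le_mul_right n (by omega)
              rw [(htail (i + s*n) (by omega)).2]
              simp
          _ = ((Finset.Ico (j₀+1) (j+1)).card : ℤ) * 2 := by
              rw [Finset.sum_const, nsmul_eq_mul]
      refine ⟨((Finset.Ioc (i + j₀*n) (i + j*n)).card : ℤ)
        - ((Finset.Ico (j₀+1) (j+1)).card : ℤ), ?_⟩
      rw [hz1, hz2]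
      ring
    set ε : ℝ := (-1:ℝ) ^ (S n i j₀ a) with hε
    have hterm0 : ∀ j, j < j₀ → F j - G j = 0 := by
      intro j hj
      have hsucc : (j+1) * n = j*n + n := Nat.succ_mul j n
      have hmul : (j+1) * n ≤ j₀ * n := Nat.mul_le_mul_right n (by omega)
      have hlt : i + j*n < m := by omega
      rw [hm_le hlt]
      ring
    have htermj₀ : F j₀ - G j₀ = ε / 3 ^ (j₀+1) := by
      simp only [hF, hG]
      rw [← hSj₀, hj₀, hm, xi_zpow, xi_zpow, hε]
      push_cast
      ring
    have htermgt : ∀ j, j₀ < j → F j - G j = -2 * ε / 3 ^ (j+1) := by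
      intro j hj
      have hsucc : (j₀+1) * n = j₀*n + n := Nat.succ_mul j₀ n
      have hmul : (j₀+1) * n ≤ j * n := Nat.mul_le_mul_right n (by omega)
      have hpj : m < i + j*n := by omega
      obtain ⟨c, hc⟩ := hSb j (le_of_lt hj)
      simp only [hF, hG]
      rw [(htail _ hpj).1, (htail _ hpj).2, hSa j (le_of_lt hj), hc, ← hSj₀]
      rw [xi_zpow, xi_zpow, neg_one_zpow_add, neg_one_zpow_even (m := 2*c) ⟨c, two_mul c⟩, hε]
      push_cast
      ring
    have hsummable : Summable (fun j => F j - G j) := hFa.sub hFb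
    rw [← Summable.sum_add_tsum_nat_add (j₀+1) hsummable]
    have hrange : ∑ j ∈ Finset.range (j₀+1), (F j - G j) = ε / 3 ^ (j₀+1) := by
      rw [Finset.sum_eq_single j₀]
      · exact htermj₀
      · intro j hj hne
        rw [Finset.mem_range] at hj
        exact hterm0 j (by omega)
      · intro hcon
        exact absurd (Finset.mem_range.mpr (by omega)) hcon
    have htails : (∑' k : ℕ, (F (k + (j₀+1)) - G (k + (j₀+1))))
        = -2 * ε / 2 * ((3:ℝ)^(j₀+1))⁻¹ := by
      have hcg : ∀ k : ℕ, F (k + (j₀+1)) - G (k + (j₀+1)) = (-2*ε) / 3 ^ (k + (j₀+1) + 1) :=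
        fun k => htermgt (k + (j₀+1)) (by omega)
      rw [tsum_congr hcg, tsum_const_div_shift]
    rw [hrange, htails]
    field_simp
    ring
  · have hkey0 : ∀ j, F j - G j = 0 := by
      intro j
      rcases Nat.lt_trichotomy (i + j*n) m with hlt | heq | hgt
      · rw [hm_le hlt]; ring
      · exact absurd ⟨j, heq⟩ hex
      · have h1 : ∑ q ∈ Finset.Ioc m (i+j*n), ((a q:ℤ) - b q)
            = ((Finset.Ioc m (i+j*n)).card : ℤ) * (-2) := by
          calc ∑ q ∈ Finset.Ioc m (i+j*n), ((a q:ℤ) - b q)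
              = ∑ _q ∈ Finset.Ioc m (i+j*n), (-2:ℤ) := by
                refine Finset.sum_congr rfl fun q hq => ?_
                rw [Finset.mem_Ioc] at hq
                rw [(htail q hq.1).1, (htail q hq.1).2]
                simp
            _ = ((Finset.Ioc m (i+j*n)).card : ℤ) * (-2) := by
                rw [Finset.sum_const, nsmul_eq_mul]
        have hIccN : ∑ q ∈ Finset.Icc 1 (i + j*n), ((a q:ℤ) - b q)
            = 1 + ((Finset.Ioc m (i+j*n)).card : ℤ) * (-2) := by
          rw [sum_Icc_split (fun q => (a q:ℤ) - b q) (le_of_lt hgt), hIccm, h1]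
        have hEven2 : Even (∑ s ∈ Finset.range (j+1), ((a (i+s*n):ℤ) - b (i+s*n))) := by
          refine even_sum_int fun s _ => ?_
          have hne : i + s*n ≠ m := fun hcon => hex ⟨s, hcon⟩
          rcases Nat.lt_or_ge (i + s*n) m with h | h
          · rw [hpre (i+s*n) (by omega) h]
            simp
          · have hgt' : m < i + s*n := by omega
            rw [(htail _ hgt').1, (htail _ hgt').2]
            exact ⟨-1, by norm_num⟩
        obtain ⟨c2, hc2⟩ := hEven2
        have hdiff : S n i j a - S n i j b
            = (∑ q ∈ Finset.Icc 1 (i + j*n), ((a q : ℤ) - b q))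
              - ∑ s ∈ Finset.range (j+1), ((a (i + s*n) : ℤ) - b (i + s*n)) := by
          unfold S
          rw [Finset.sum_sub_distrib, Finset.sum_sub_distrib]
          ring
        rw [hIccN, hc2] at hdiff
        have hSrel : S n i j a = S n i j b
            + (2 * (-((Finset.Ioc m (i+j*n)).card : ℤ) - c2) + 1) := by omega
        simp only [hF, hG]
        rw [(htail _ hgt).1, (htail _ hgt).2, hSrel, xi_zpow, xi_zpow, neg_one_zpow_add,
          neg_one_zpow_odd (m := 2 * (-((Finset.Ioc m (i+j*n)).card : ℤ) - c2) + 1)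
            ⟨(-((Finset.Ioc m (i+j*n)).card : ℤ) - c2), rfl⟩]
        push_cast
        ring
    calc (∑' j, (F j - G j)) = ∑' _j : ℕ, (0:ℝ) := tsum_congr hkey0
    _ = 0 := tsum_zero

lemma xcoord_welldef (n i : ℕ) (hn : 1 ≤ n) (hi : 1 ≤ i) {a b : ℕ → ℕ}
    (ha : IsDigitSeq a) (hb : IsDigitSeq b) (hab : Phi a = Phi b) :
    xcoord n i a = xcoord n i b := by
  by_cases h : ∀ q, 1 ≤ q → a q = b q
  · exact xcoord_congr n i hi h
  · push_neg at h
    obtain ⟨q₀, hq₀1, hq₀2⟩ := h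
    have hex : ∃ q, 1 ≤ q ∧ a q ≠ b q := ⟨q₀, hq₀1, hq₀2⟩
    have hm := Nat.find_spec hex
    set m := Nat.find hex with hmdef
    have hpre : ∀ q, 1 ≤ q → q < m → a q = b q := by
      intro q h1 h2
      by_contra hne
      exact (Nat.find_min hex h2) ⟨h1, hne⟩
    rcases Nat.lt_or_ge (a m) (b m) with hc | hc
    · obtain ⟨h1, h2⟩ := phi_tail hb ha hab.symm hm.1
        (fun q hq1 hq2 => (hpre q hq1 hq2).symm) hc
      exact (xcoord_switch n i hn hi hb ha hm.1
        (fun q hq1 hq2 => (hpre q hq1 hq2).symm) h1 h2).symm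
    · have hc' : b m < a m := by omega
      obtain ⟨h1, h2⟩ := phi_tail ha hb hab hm.1 hpre hc'
      exact xcoord_switch n i hn hi ha hb hm.1 hpre h1 h2

/-! ### The self-affinity identity at the level of digit sequences -/

lemma sum_Ioc_shift (g : ℕ → ℤ) (K P : ℕ) :
    ∑ q ∈ Finset.Ioc K (K + P), g q = ∑ q ∈ Finset.Icc 1 P, g (q + K) := by
  have h1 : Finset.Ioc K (K+P) = Finset.Ico (K+1) (K+P+1) := by
    ext q; simp only [Finset.mem_Ioc, Finset.mem_Ico]; omega
  have h2 : Finset.Icc 1 P = Finset.Ico 1 (P+1) := by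
    ext q; simp only [Finset.mem_Icc, Finset.mem_Ico]; omega
  rw [h1, h2, Finset.sum_Ico_eq_sum_range, Finset.sum_Ico_eq_sum_range]
  have e1 : K+P+1 - (K+1) = P := by omega
  have e2 : P+1-1 = P := by omega
  rw [e1, e2]
  refine Finset.sum_congr rfl fun x _ => ?_
  congr 1
  omega

lemma xcoord_shift (n i : ℕ) (hi1 : 1 ≤ i) (hin : i ≤ n) {a : ℕ → ℕ} (ha : IsDigitSeq a)
    (k : ℕ) (σ : ℤ)
    (hσ : σ = (∑ q ∈ Finset.Icc 1 (k * n), (a q : ℤ)) -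
      ∑ r ∈ Finset.range k, (a (i + r * n) : ℤ)) :
    xcoord n i a - xcoord n i (fun s => if s ≤ k * n then a s else 0)
      = (-1:ℝ) ^ σ * xcoord n i (fun s => a (s + k * n)) / 3 ^ k := by
  set aT : ℕ → ℕ := fun s => if s ≤ k * n then a s else 0 with haT
  set a' : ℕ → ℕ := fun s => a (s + k * n) with ha'
  have hdT : IsDigitSeq aT := by
    intro s
    rw [haT]
    dsimp only
    split
    · exact ha s
    · omega
  have hd' : IsDigitSeq a' := fun s => ha _
  have hFa := summable_xcoord n i ha
  have hFT := summable_xcoord n i hdT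
  have hFp := summable_xcoord n i hd'
  set F : ℕ → ℝ := fun j => ((xiPerm ^ (S n i j a)) ((a (i + j * n) : ℝ))) / 3 ^ (j + 1) with hF
  set T : ℕ → ℝ := fun j => ((xiPerm ^ (S n i j aT)) ((aT (i + j * n) : ℝ))) / 3 ^ (j + 1) with hT
  set Fp : ℕ → ℝ := fun j => ((xiPerm ^ (S n i j a')) ((a' (i + j * n) : ℝ))) / 3 ^ (j + 1) with hFp2
  have hlow : ∀ j, j < k → F j = T j := by
    intro j hj
    have hsucc : (j+1) * n = j*n + n := Nat.succ_mul j n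
    have hmul : (j+1) * n ≤ k * n := Nat.mul_le_mul_right n (by omega)
    have hle : i + j*n ≤ k*n := by omega
    have hS : S n i j aT = S n i j a := by
      unfold S
      congr 1
      · refine Finset.sum_congr rfl fun q hq => ?_
        rw [Finset.mem_Icc] at hq
        rw [haT]
        dsimp only
        rw [if_pos (by omega)]
      · refine Finset.sum_congr rfl fun s hs => ?_
        rw [Finset.mem_range] at hs
        have hmul2 : s * n ≤ j * n := Nat.mul_le_mul_right n (by omega)
        rw [haT]
        dsimp only
        rw [if_pos (by omega)]
    have hdig : aT (i + j*n) = a (i + j*n) := by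
      rw [haT]
      dsimp only
      rw [if_pos (by omega)]
    simp only [hF, hT]
    rw [hS, hdig]
  have hidx2 : ∀ s : ℕ, i + (k + s)*n = (i + s*n) + k*n := fun s => by ring
  have hSshift : ∀ j', S n i (j' + k) a = σ + S n i j' a' := by
    intro j'
    have hidx : i + (j' + k)*n = k*n + (i + j'*n) := by ring
    unfold S
    rw [hidx]
    rw [sum_Icc_split (fun q => (a q : ℤ)) (Nat.le_add_right (k*n) (i + j'*n))]
    rw [sum_Ioc_shift (fun q => (a q : ℤ)) (k*n) (i + j'*n)]
    rw [sum_range_split (fun s => (a (i + s*n) : ℤ)) (show k ≤ j'+k+1 by omega)]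
    have e0 : j'+k+1 = k + (j'+1) := by omega
    rw [e0, Finset.sum_Ico_eq_sum_range]
    have e : k + (j'+1) - k = j'+1 := by omega
    rw [e, hσ, ha']
    dsimp only
    rw [Finset.sum_congr rfl (fun x _ => show (a (i + (k + x)*n) : ℤ) = (a ((i + x*n) + k*n) : ℤ)
      from by rw [hidx2])]
    ring
  have hST : ∀ j', S n i (j' + k) aT = σ := by
    intro j'
    have hidx : i + (j' + k)*n = k*n + (i + j'*n) := by ring
    unfold S
    rw [hidx]
    rw [sum_Icc_split (fun q => (aT q : ℤ)) (Nat.le_add_right (k*n) (i + j'*n))]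
    rw [sum_Ioc_shift (fun q => (aT q : ℤ)) (k*n) (i + j'*n)]
    rw [sum_range_split (fun s => (aT (i + s*n) : ℤ)) (show k ≤ j'+k+1 by omega)]
    have e0 : j'+k+1 = k + (j'+1) := by omega
    rw [e0, Finset.sum_Ico_eq_sum_range]
    have e : k + (j'+1) - k = j'+1 := by omega
    rw [e, hσ]
    have hz1 : ∑ q ∈ Finset.Icc 1 (i + j'*n), ((aT (q + k*n) : ℤ)) = 0 := by
      refine Finset.sum_eq_zero fun q hq => ?_
      rw [Finset.mem_Icc] at hq
      rw [haT]
      dsimp only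
      rw [if_neg (by omega)]
      simp
    have hz2 : ∑ x ∈ Finset.range (j'+1), ((aT (i + (k + x)*n) : ℤ)) = 0 := by
      refine Finset.sum_eq_zero fun x hx => ?_
      have hmul : k * n ≤ (k + x) * n := Nat.mul_le_mul_right n (by omega)
      rw [haT]
      dsimp only
      rw [if_neg (by omega)]
      simp
    have he1 : ∑ q ∈ Finset.Icc 1 (k*n), ((aT q : ℤ)) = ∑ q ∈ Finset.Icc 1 (k*n), ((a q : ℤ)) := by
      refine Finset.sum_congr rfl fun q hq => ?_
      rw [Finset.mem_Icc] at hq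
      rw [haT]
      dsimp only
      rw [if_pos hq.2]
    have he2 : ∑ s ∈ Finset.range k, ((aT (i + s*n) : ℤ))
        = ∑ s ∈ Finset.range k, ((a (i + s*n) : ℤ)) := by
      refine Finset.sum_congr rfl fun s hs => ?_
      rw [Finset.mem_range] at hs
      have hsucc : (s+1) * n = s*n + n := Nat.succ_mul s n
      have hmul : (s+1) * n ≤ k * n := Nat.mul_le_mul_right n (by omega)
      rw [haT]
      dsimp only
      rw [if_pos (by omega)]
    rw [hz1, hz2, he1, he2]
    ring
  have hdigT : ∀ j' : ℕ, aT (i + (j'+k)*n) = 0 := by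
    intro j'
    have hmul : k * n ≤ (j'+k) * n := Nat.mul_le_mul_right n (by omega)
    rw [haT]
    dsimp only
    rw [if_neg (by omega)]
  have hdigA : ∀ j' : ℕ, a (i + (j'+k)*n) = a' (i + j'*n) := by
    intro j'
    rw [ha']
    dsimp only
    congr 1
    ring
  have hterm : ∀ j' : ℕ, F (j' + k) - T (j' + k) = ((-1:ℝ)^σ / 3^k) * Fp j' := by
    intro j'
    simp only [hF, hT, hFp2]
    rw [hSshift j', hST j', hdigT j', hdigA j']
    rw [xi_zpow, xi_zpow, xi_zpow, neg_one_zpow_add]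
    have hp : (3:ℝ)^(j'+k+1) = 3^(j'+1) * 3^k := by
      rw [← pow_add]
      congr 1
      omega
    rw [hp]
    push_cast
    field_simp
    ring
  have hsub : Summable (fun j => F j - T j) := hFa.sub hFT
  have heq : xcoord n i a - xcoord n i aT = ∑' j, (F j - T j) := (Summable.tsum_sub hFa hFT).symm
  rw [heq, ← Summable.sum_add_tsum_nat_add k hsub]
  have hr : ∑ j ∈ Finset.range k, (F j - T j) = 0 :=
    Finset.sum_eq_zero fun j hj => by rw [hlow j (Finset.mem_range.mp hj)]; ring
  have ht2 : (∑' j' : ℕ, (F (j' + k) - T (j' + k))) = (-1:ℝ)^σ * xcoord n i a' / 3^k := by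
    rw [tsum_congr hterm, tsum_mul_left]
    have hxc : (∑' j', Fp j') = xcoord n i a' := rfl
    rw [hxc]
    ring
  rw [hr, ht2]
  ring

lemma phi_shift {a : ℕ → ℕ} (ha : IsDigitSeq a) (K : ℕ) :
    Phi a - Phi (fun s => if s ≤ K then a s else 0) = Phi (fun s => a (s + K)) / 3 ^ K := by
  set aT : ℕ → ℕ := fun s => if s ≤ K then a s else 0 with haT
  set a' : ℕ → ℕ := fun s => a (s + K) with ha'
  have hdT : IsDigitSeq aT := by
    intro s
    rw [haT]
    dsimp only
    split
    · exact ha s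
    · omega
  have hd' : IsDigitSeq a' := fun s => ha _
  have h1 := summable_phi ha
  have h2 := summable_phi hdT
  have h3 := summable_phi hd'
  have hsub : Summable (fun j : ℕ => (a (j+1):ℝ)/3^(j+1) - (aT (j+1):ℝ)/3^(j+1)) := h1.sub h2
  have heq : Phi a - Phi aT = ∑' j, ((a (j+1):ℝ)/3^(j+1) - (aT (j+1):ℝ)/3^(j+1)) :=
    (Summable.tsum_sub h1 h2).symm
  rw [heq, ← Summable.sum_add_tsum_nat_add K hsub]
  have hr : ∑ j ∈ Finset.range K, ((a (j+1):ℝ)/3^(j+1) - (aT (j+1):ℝ)/3^(j+1)) = 0 := by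
    refine Finset.sum_eq_zero fun j hj => ?_
    rw [Finset.mem_range] at hj
    rw [haT]
    dsimp only
    rw [if_pos (by omega)]
    ring
  have ht : (∑' j : ℕ, ((a (j+K+1):ℝ)/3^(j+K+1) - (aT (j+K+1):ℝ)/3^(j+K+1)))
      = ((3:ℝ)^K)⁻¹ * Phi a' := by
    have hcg : ∀ j : ℕ, ((a (j+K+1):ℝ)/3^(j+K+1) - (aT (j+K+1):ℝ)/3^(j+K+1))
        = ((3:ℝ)^K)⁻¹ * ((a' (j+1):ℝ)/3^(j+1)) := by
      intro j
      have hT0 : aT (j+K+1) = 0 := by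
        rw [haT]
        dsimp only
        rw [if_neg (by omega)]
      have ha'j : a' (j+1) = a (j+K+1) := by
        rw [ha']
        dsimp only
        congr 1
        omega
      have hp : (3:ℝ)^(j+K+1) = 3^K * 3^(j+1) := by
        rw [← pow_add]
        congr 1
        omega
      rw [hT0, ha'j, hp]
      push_cast
      field_simp
      ring
    rw [tsum_congr hcg, tsum_mul_left]
    rfl
  rw [hr, ht]
  ring

/-! ### The main theorem -/

/-- the self-affinity identity
`3^k (x_i(t) − x_i(t(k))) = (−1)^{σ(k)} x_i(3^{kn}(t − t(k)))`. -/
theorem peanoCoord_self_affine_identity (n i : ℕ) (hn : 2 ≤ n) (hi1 : 1 ≤ i) (hin : i ≤ n)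
    (a : ℕ → ℕ) (ha : IsDigitSeq a) (k : ℕ) (t tk : ℝ) (σ : ℤ)
    (htdef : t = Phi a)
    (htk : tk = Phi (fun s => if s ≤ k * n then a s else 0))
    (hσ : σ = (∑ q ∈ Finset.Icc 1 (k * n), (a q : ℤ)) -
      ∑ r ∈ Finset.range k, (a (i + r * n) : ℤ)) :
    (3 : ℝ) ^ k * (peanoCoord n i t - peanoCoord n i tk) =
      (-1 : ℝ) ^ σ * peanoCoord n i (3 ^ (k * n) * (t - tk)) := by
  have hwd : ∀ (c : ℕ → ℕ), IsDigitSeq c → peanoCoord n i (Phi c) = xcoord n i c := by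
    intro c hc
    exact xcoord_welldef n i (by omega) hi1 (isDigitSeq_ternary _) hc
      (by rw [phi_ternary phi_nonneg (phi_le_one hc)])
  set aT : ℕ → ℕ := fun s => if s ≤ k * n then a s else 0 with haT
  set a' : ℕ → ℕ := fun s => a (s + k * n) with ha'
  have hdT : IsDigitSeq aT := by
    intro s
    rw [haT]
    dsimp only
    split
    · exact ha s
    · omega
  have hd' : IsDigitSeq a' := fun s => ha _
  have e3 : (3:ℝ) ^ (k * n) * (t - tk) = Phi a' := by
    rw [htdef, htk, phi_shift ha (k*n)]
    field_simp
    rfl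
  rw [e3, htdef, htk, hwd a ha, hwd aT hdT, hwd a' hd']
  have hmain := xcoord_shift n i hi1 hin ha k σ hσ
  rw [haT, ha']
  rw [hmain]
  have hpow : (3:ℝ)^k ≠ 0 := by positivity
  field_simp
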